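/- Let K be a finite group and ρ = ⊕_π π^{⊕m_π} a unitary representation on H = ⊕_π H_π^{⊕m_π} (finite direct sum over irreducibles π with finite multiplicities m_π). Let 𝒜 = {f_j}_{j∈I} ⊂ H be a finite family, writing f_j = (f^π_{i,j})_{π, 1≤i≤m_π} with f^π_{i,j} ∈ H_π. Fix 0 < A ≤ B. Then (1/|K|)Σ_{j∈I}Σ_{ξ∈K} |⟨g, ρ(ξ)f_j⟩|² lies between A‖g‖² and B‖g‖² for all g ∈ H (i.e., the orbit is a frame for H with continuous bounds A, B) if and only if for every π and every (c_i)_{i=1}^{m_π} ∈ ℂ^{m_π}: d_π·A·Σ_i |c_i|² ≤ Σ_{j∈I} ‖Σ_{i=1}^{m_π} c_i f^π_{i,j}‖² ≤ d_π·B·Σ_i |c_i|², where d_π = dim H_π. Equivalently, the rows (f^π_{i,j})_{j∈I} of the coefficient array form a Riesz sequence in H_π^{⊕I} with bounds d_π A and d_π B. -/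

import Mathlib

open scoped ComplexInnerProductSpace

namespace GFDAux

set_option linter.unusedSectionVars false



theorem norm_sq_complex (z : ℂ) : ‖z‖ ^ 2 = (z * (starRingEnd ℂ) z).re := by
  rw [Complex.mul_conj]
  simp [Complex.normSq_eq_norm_sq, ← Complex.ofReal_pow]

theorem norm_sq_inner_self {V : Type*} [NormedAddCommGroup V] [InnerProductSpace ℂ V]
    (v : V) : ‖v‖ ^ 2 = (⟪v, v⟫ : ℂ).re := by
  rw [← @inner_self_eq_norm_sq ℂ]
  rfl

theorem inner_self_sum {V : Type*} [NormedAddCommGroup V] [InnerProductSpace ℂ V]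
    {n : ℕ} (c : Fin n → ℂ) (v : Fin n → V) :
    (⟪∑ k, c k • v k, ∑ k, c k • v k⟫ : ℂ)
      = ∑ k', ∑ k, ((starRingEnd ℂ) (c k') * c k) * ⟪v k', v k⟫ := by
  rw [sum_inner]
  refine Finset.sum_congr rfl fun k' _ => ?_
  rw [inner_smul_left, inner_sum, Finset.mul_sum]
  refine Finset.sum_congr rfl fun k _ => ?_
  rw [inner_smul_right]
  ring

theorem parseval {V : Type*} [NormedAddCommGroup V] [InnerProductSpace ℂ V]
    [FiniteDimensional ℂ V] (x : V) :
    ∑ t, ‖(⟪x, stdOrthonormalBasis ℂ V t⟫ : ℂ)‖ ^ 2 = ‖x‖ ^ 2 := by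
  set e := stdOrthonormalBasis ℂ V
  rw [norm_sq_inner_self, ← e.sum_inner_mul_inner x x, Complex.re_sum]
  refine Finset.sum_congr rfl fun t _ => ?_
  rw [norm_sq_complex, ← inner_conj_symm x (e t), RingHomCompTriple.comp_apply, RingHom.id_apply, inner_conj_symm, mul_comm]


theorem sum_comm3 {α β γ M : Type*} [AddCommMonoid M] [Fintype α] [Fintype β] [Fintype γ]
    (F : α → β → γ → M) :
    ∑ a : α, ∑ b : β, ∑ c : γ, F a b c = ∑ b : β, ∑ c : γ, ∑ a : α, F a b c :=
  calc ∑ a : α, ∑ b : β, ∑ c : γ, F a b c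
      = ∑ b : β, ∑ a : α, ∑ c : γ, F a b c := Finset.sum_comm
    _ = ∑ b : β, ∑ c : γ, ∑ a : α, F a b c :=
        Finset.sum_congr rfl (fun b _ => Finset.sum_comm)

theorem basis_sum_eq {V : Type*} [NormedAddCommGroup V] [InnerProductSpace ℂ V]
    [FiniteDimensional ℂ V] {n : ℕ} (g : Fin n → V) (v : Fin n → V) :
    ∑ t, ‖∑ k, (⟪g k, stdOrthonormalBasis ℂ V t⟫ : ℂ) • v k‖ ^ 2
      = (∑ k, ∑ k', (⟪v k', v k⟫ : ℂ) * ⟪g k, g k'⟫).re := by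
  set e := stdOrthonormalBasis ℂ V
  calc ∑ t, ‖∑ k, (⟪g k, e t⟫ : ℂ) • v k‖ ^ 2
      = ∑ t, (∑ k', ∑ k, ((starRingEnd ℂ) (⟪g k', e t⟫) * ⟪g k, e t⟫) * ⟪v k', v k⟫).re := by
        refine Finset.sum_congr rfl fun t _ => ?_
        rw [norm_sq_inner_self, inner_self_sum]
    _ = (∑ k', ∑ k, ∑ t, ((starRingEnd ℂ) (⟪g k', e t⟫) * ⟪g k, e t⟫) * ⟪v k', v k⟫).re := by
        rw [← Complex.re_sum, sum_comm3]
    _ = (∑ k', ∑ k, (⟪g k, g k'⟫ : ℂ) * ⟪v k', v k⟫).re := by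
        congr 1
        refine Finset.sum_congr rfl fun k' _ => Finset.sum_congr rfl fun k _ => ?_
        calc ∑ t, ((starRingEnd ℂ) (⟪g k', e t⟫) * ⟪g k, e t⟫) * ⟪v k', v k⟫
            = (∑ t, (⟪g k, e t⟫ : ℂ) * ⟪e t, g k'⟫) * ⟪v k', v k⟫ := by
              rw [Finset.sum_mul]
              refine Finset.sum_congr rfl fun t _ => ?_
              rw [inner_conj_symm]
              ring
          _ = (⟪g k, g k'⟫ : ℂ) * ⟪v k', v k⟫ := by rw [e.sum_inner_mul_inner]
    _ = (∑ k, ∑ k', (⟪v k', v k⟫ : ℂ) * ⟪g k, g k'⟫).re := by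
        rw [Finset.sum_comm]
        congr 1
        exact Finset.sum_congr rfl fun k _ => Finset.sum_congr rfl fun k' _ => mul_comm _ _


theorem aux_expand {X P : Type*} [Fintype X] [Fintype P] (c : ℂ) (a : X → P → ℂ) :
    c * ∑ x : X, ((∑ p : P, a x p) * (starRingEnd ℂ) (∑ p : P, a x p))
      = ∑ p : P, ∑ q : P, (c * ∑ x : X, a x p * (starRingEnd ℂ) (a x q)) := by
  calc c * ∑ x : X, ((∑ p : P, a x p) * (starRingEnd ℂ) (∑ p : P, a x p))
      = c * ∑ x : X, ∑ p : P, ∑ q : P, a x p * (starRingEnd ℂ) (a x q) := by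
        simp only [map_sum, Finset.sum_mul_sum]
    _ = c * ∑ p : P, ∑ q : P, ∑ x : X, a x p * (starRingEnd ℂ) (a x q) := by
        rw [sum_comm3]
    _ = ∑ p : P, ∑ q : P, (c * ∑ x : X, a x p * (starRingEnd ℂ) (a x q)) := by
        simp only [Finset.mul_sum]




section Schur
variable {K : Type*} [Group K] [Fintype K]

theorem schur_endo {V : Type*} [NormedAddCommGroup V] [InnerProductSpace ℂ V]
    [FiniteDimensional ℂ V]
    (π : K →* (V ≃ₗᵢ[ℂ] V))
    (hirr : ∀ W : Submodule ℂ V, (∀ ξ : K, ∀ v ∈ W, π ξ v ∈ W) → W = ⊥ ∨ W = ⊤)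
    (T : V →ₗ[ℂ] V) (hT : ∀ (ξ : K) (v : V), T (π ξ v) = π ξ (T v)) :
    ∃ μ : ℂ, ∀ v, T v = μ • v := by
  by_cases hV : Subsingleton V
  · exact ⟨0, fun v => Subsingleton.elim _ _⟩
  · have : Nontrivial V := not_subsingleton_iff_nontrivial.mp hV
    obtain ⟨μ, hμ⟩ := Module.End.exists_eigenvalue (T : Module.End ℂ V)
    refine ⟨μ, fun v => ?_⟩
    have hinv : ∀ ξ : K, ∀ v ∈ Module.End.eigenspace (T : Module.End ℂ V) μ,
        π ξ v ∈ Module.End.eigenspace (T : Module.End ℂ V) μ := by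
      intro ξ v hv
      rw [Module.End.mem_eigenspace_iff] at hv ⊢
      show T (π ξ v) = μ • π ξ v
      rw [hT, hv, map_smul]
    rcases hirr _ hinv with h | h
    · exact absurd h hμ
    · have hv : v ∈ Module.End.eigenspace (T : Module.End ℂ V) μ := h ▸ Submodule.mem_top
      exact Module.End.mem_eigenspace_iff.mp hv

set_option linter.unusedSectionVars false

theorem schur_cross {V W : Type*} [NormedAddCommGroup V] [InnerProductSpace ℂ V]
    [NormedAddCommGroup W] [InnerProductSpace ℂ W]
    (πV : K →* (V ≃ₗᵢ[ℂ] V)) (πW : K →* (W ≃ₗᵢ[ℂ] W))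
    (hirrV : ∀ U : Submodule ℂ V, (∀ ξ : K, ∀ v ∈ U, πV ξ v ∈ U) → U = ⊥ ∨ U = ⊤)
    (hirrW : ∀ U : Submodule ℂ W, (∀ ξ : K, ∀ v ∈ U, πW ξ v ∈ U) → U = ⊥ ∨ U = ⊤)
    (hne : ¬ ∃ T : V ≃ₗ[ℂ] W, ∀ (ξ : K) (v : V), T (πV ξ v) = πW ξ (T v))
    (T : V →ₗ[ℂ] W) (hT : ∀ (ξ : K) (v : V), T (πV ξ v) = πW ξ (T v)) : T = 0 := by
  have hker : ∀ ξ : K, ∀ v ∈ LinearMap.ker T, πV ξ v ∈ LinearMap.ker T := by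
    intro ξ v hv
    rw [LinearMap.mem_ker] at hv ⊢
    rw [hT, hv, map_zero]
  rcases hirrV _ hker with h | h
  swap
  · exact LinearMap.ker_eq_top.mp h
  · have hrange : ∀ ξ : K, ∀ w ∈ LinearMap.range T, πW ξ w ∈ LinearMap.range T := by
      rintro ξ w ⟨v, rfl⟩
      exact ⟨πV ξ v, hT ξ v⟩
    rcases hirrW _ hrange with h2 | h2
    · exact LinearMap.range_eq_bot.mp h2
    · exfalso
      apply hne
      have hbij : Function.Bijective T :=
        ⟨LinearMap.ker_eq_bot.mp h, LinearMap.range_eq_top.mp h2⟩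
      exact ⟨LinearEquiv.ofBijective T hbij, fun ξ v => hT ξ v⟩

variable {V W : Type*} [NormedAddCommGroup V] [InnerProductSpace ℂ V]
    [NormedAddCommGroup W] [InnerProductSpace ℂ W]

/-- averaged operator `x ↦ |K|⁻¹ ∑ ξ ⟪b', πV ξ⁻¹ x⟫ • πW ξ b`. -/
noncomputable def avgOp (πV : K →* (V ≃ₗᵢ[ℂ] V)) (πW : K →* (W ≃ₗᵢ[ℂ] W))
    (b : W) (b' : V) : V →ₗ[ℂ] W where
  toFun x := (Fintype.card K : ℂ)⁻¹ • ∑ ξ : K, (⟪b', πV ξ⁻¹ x⟫) • πW ξ b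
  map_add' x y := by
    simp only [map_add, inner_add_right, add_smul, Finset.sum_add_distrib, smul_add]
  map_smul' c x := by
    simp only [map_smul, inner_smul_right, RingHom.id_apply, mul_smul, ← Finset.smul_sum]
    rw [smul_comm]

theorem avgOp_apply (πV : K →* (V ≃ₗᵢ[ℂ] V)) (πW : K →* (W ≃ₗᵢ[ℂ] W))
    (b : W) (b' : V) (x : V) :
    avgOp πV πW b b' x = (Fintype.card K : ℂ)⁻¹ • ∑ ξ : K, (⟪b', πV ξ⁻¹ x⟫) • πW ξ b := rfl

theorem pi_mul_apply (πV : K →* (V ≃ₗᵢ[ℂ] V)) (a b : K) (x : V) :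
    πV a (πV b x) = πV (a * b) x := by
  rw [map_mul]; rfl

theorem avgOp_equivariant (πV : K →* (V ≃ₗᵢ[ℂ] V)) (πW : K →* (W ≃ₗᵢ[ℂ] W))
    (b : W) (b' : V) (η : K) (x : V) :
    avgOp πV πW b b' (πV η x) = πW η (avgOp πV πW b b' x) := by
  rw [avgOp_apply, avgOp_apply, map_smul, map_sum]
  congr 1
  calc ∑ ξ : K, (⟪b', πV ξ⁻¹ (πV η x)⟫) • πW ξ b
      = ∑ ξ : K, (⟪b', πV ξ⁻¹ x⟫) • πW (η * ξ) b := by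
        refine (Fintype.sum_equiv (Equiv.mulLeft η) _ _ (fun ξ => ?_)).symm
        simp only [Equiv.coe_mulLeft]
        rw [pi_mul_apply πV]
        congr 2
        group
    _ = ∑ ξ : K, πW η ((⟪b', πV ξ⁻¹ x⟫) • πW ξ b) := by
        refine Finset.sum_congr rfl (fun ξ _ => ?_)
        rw [map_smul, pi_mul_apply]

theorem inner_avgOp (πV : K →* (V ≃ₗᵢ[ℂ] V)) (πW : K →* (W ≃ₗᵢ[ℂ] W))
    (b a : W) (b' a' : V) :
    ⟪a, avgOp πV πW b b' a'⟫
      = (Fintype.card K : ℂ)⁻¹ * ∑ ξ : K, ⟪a, πW ξ b⟫ * ⟪πV ξ b', a'⟫ := by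
  rw [avgOp_apply, inner_smul_right, inner_sum]
  congr 1
  refine Finset.sum_congr rfl (fun ξ _ => ?_)
  rw [inner_smul_right]
  have h1 : ⟪b', πV ξ⁻¹ a'⟫ = ⟪πV ξ b', a'⟫ := by
    rw [← LinearIsometryEquiv.inner_map_map (πV ξ) b' (πV ξ⁻¹ a'), pi_mul_apply,
      mul_inv_cancel, map_one]
    rfl
  rw [h1, mul_comm]

theorem orth_diff (πV : K →* (V ≃ₗᵢ[ℂ] V)) (πW : K →* (W ≃ₗᵢ[ℂ] W))
    (hirrV : ∀ U : Submodule ℂ V, (∀ ξ : K, ∀ v ∈ U, πV ξ v ∈ U) → U = ⊥ ∨ U = ⊤)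
    (hirrW : ∀ U : Submodule ℂ W, (∀ ξ : K, ∀ v ∈ U, πW ξ v ∈ U) → U = ⊥ ∨ U = ⊤)
    (hne : ¬ ∃ T : V ≃ₗ[ℂ] W, ∀ (ξ : K) (v : V), T (πV ξ v) = πW ξ (T v))
    (a b : W) (a' b' : V) :
    (Fintype.card K : ℂ)⁻¹ * ∑ ξ : K, ⟪a, πW ξ b⟫ * ⟪πV ξ b', a'⟫ = 0 := by
  rw [← inner_avgOp]
  have : avgOp πV πW b b' = 0 :=
    schur_cross πV πW hirrV hirrW hne _ (avgOp_equivariant πV πW b b')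
  rw [this]
  simp

theorem orth_same [FiniteDimensional ℂ V] (πV : K →* (V ≃ₗᵢ[ℂ] V))
    (hirrV : ∀ U : Submodule ℂ V, (∀ ξ : K, ∀ v ∈ U, πV ξ v ∈ U) → U = ⊥ ∨ U = ⊤)
    (a b a' b' : V) :
    (Fintype.card K : ℂ)⁻¹ * ∑ ξ : K, ⟪a, πV ξ b⟫ * ⟪πV ξ b', a'⟫
      = (Module.finrank ℂ V : ℂ)⁻¹ * ⟪b', b⟫ * ⟪a, a'⟫ := by
  by_cases hd : Module.finrank ℂ V = 0
  · have : Subsingleton V := Module.finrank_zero_iff.mp hd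
    have ha : a = 0 := Subsingleton.elim _ _
    simp [ha, inner_zero_left]
  · obtain ⟨μ, hμ⟩ := schur_endo πV hirrV (avgOp πV πV b b')
      (avgOp_equivariant πV πV b b')
    have key : ∀ x y : V, (Fintype.card K : ℂ)⁻¹ * ∑ ξ : K, ⟪x, πV ξ b⟫ * ⟪πV ξ b', y⟫
        = μ * ⟪x, y⟫ := by
      intro x y
      rw [← inner_avgOp, hμ, inner_smul_right]
    -- compute μ via the orthonormal basis
    set e := stdOrthonormalBasis ℂ V with he
    have trace : ∑ t, ((Fintype.card K : ℂ)⁻¹ * ∑ ξ : K, ⟪e t, πV ξ b⟫ * ⟪πV ξ b', e t⟫)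
        = ⟪b', b⟫ := by
      rw [← Finset.mul_sum, Finset.sum_comm]
      have : ∀ ξ : K, ∑ t, ⟪e t, πV ξ b⟫ * ⟪πV ξ b', e t⟫ = ⟪b', b⟫ := by
        intro ξ
        have := e.sum_inner_mul_inner (πV ξ b') (πV ξ b)
        calc ∑ t, ⟪e t, πV ξ b⟫ * ⟪πV ξ b', e t⟫
            = ∑ t, ⟪πV ξ b', e t⟫ * ⟪e t, πV ξ b⟫ := by
              refine Finset.sum_congr rfl (fun t _ => mul_comm _ _)
          _ = ⟪πV ξ b', πV ξ b⟫ := e.sum_inner_mul_inner (πV ξ b') (πV ξ b)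
          _ = ⟪b', b⟫ := LinearIsometryEquiv.inner_map_map _ _ _
      rw [Finset.sum_congr rfl (fun ξ _ => this ξ), Finset.sum_const, Finset.card_univ,
        nsmul_eq_mul, ← mul_assoc, inv_mul_cancel₀, one_mul]
      exact_mod_cast Fintype.card_ne_zero
    have trace2 : ∑ t, ((Fintype.card K : ℂ)⁻¹ * ∑ ξ : K, ⟪e t, πV ξ b⟫ * ⟪πV ξ b', e t⟫)
        = μ * (Module.finrank ℂ V : ℂ) := by
      rw [Finset.sum_congr rfl (fun t _ => key (e t) (e t))]
      have h1 : ∀ t, (⟪e t, e t⟫ : ℂ) = 1 := by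
        intro t
        rw [@inner_self_eq_norm_sq_to_K ℂ, e.orthonormal.1 t]
        norm_num
      rw [Finset.sum_congr rfl (fun t _ => by rw [h1 t])]
      simp [Finset.card_univ, mul_comm]
    have hμ2 : μ = (Module.finrank ℂ V : ℂ)⁻¹ * ⟪b', b⟫ := by
      have h := trace.symm.trans trace2
      have hd' : (Module.finrank ℂ V : ℂ) ≠ 0 := Nat.cast_ne_zero.mpr hd
      rw [mul_comm] at h
      rw [h, inv_mul_cancel_left₀ hd']
    rw [key a a', hμ2, mul_assoc]

end Schur

section Main
variable {K : Type*} [Group K] [Fintype K]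
  {ι : Type*} [Fintype ι]
  (Hπ : ι → Type*) [∀ i, NormedAddCommGroup (Hπ i)] [∀ i, InnerProductSpace ℂ (Hπ i)]
  [∀ i, FiniteDimensional ℂ (Hπ i)]
  (π : ∀ i, K →* (Hπ i ≃ₗᵢ[ℂ] Hπ i))
  (hirr : ∀ i, ∀ W : Submodule ℂ (Hπ i), (∀ ξ : K, ∀ v ∈ W, π i ξ v ∈ W) → W = ⊥ ∨ W = ⊤)
  (hineq : ∀ i j, i ≠ j →
      ¬ ∃ T : Hπ i ≃ₗ[ℂ] Hπ j, ∀ (ξ : K) (v : Hπ i), T (π i ξ v) = π j ξ (T v))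
  (m : ι → ℕ) {I : Type*} [Fintype I]
  (f : I → ∀ i, Fin (m i) → Hπ i)


include hirr hineq in
theorem keyC (j : I) (g : ∀ i, Fin (m i) → Hπ i) :
    (Fintype.card K : ℂ)⁻¹ * ∑ ξ : K,
        ((∑ i, ∑ k, ⟪g i k, π i ξ (f j i k)⟫) *
          (starRingEnd ℂ) (∑ i, ∑ k, ⟪g i k, π i ξ (f j i k)⟫))
      = ∑ i, (Module.finrank ℂ (Hπ i) : ℂ)⁻¹ *
          ∑ k, ∑ k', ⟪f j i k', f j i k⟫ * ⟪g i k, g i k'⟫ := by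
  classical
  have hz : ∀ ξ : K, (∑ i, ∑ k, (⟪g i k, π i ξ (f j i k)⟫ : ℂ))
      = ∑ p : (i : ι) × Fin (m i), ⟪g p.1 p.2, π p.1 ξ (f j p.1 p.2)⟫ := by
    intro ξ
    rw [← Finset.univ_sigma_univ, Finset.sum_sigma]
  calc (Fintype.card K : ℂ)⁻¹ * ∑ ξ : K,
        ((∑ i, ∑ k, ⟪g i k, π i ξ (f j i k)⟫) *
          (starRingEnd ℂ) (∑ i, ∑ k, ⟪g i k, π i ξ (f j i k)⟫))
      = ∑ p : (i : ι) × Fin (m i), ∑ q : (i : ι) × Fin (m i),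
          ((Fintype.card K : ℂ)⁻¹ * ∑ ξ : K,
            ⟪g p.1 p.2, π p.1 ξ (f j p.1 p.2)⟫ * ⟪π q.1 ξ (f j q.1 q.2), g q.1 q.2⟫) := by
        simp only [hz]
        rw [aux_expand]
        simp only [inner_conj_symm]
    _ = ∑ p : (i : ι) × Fin (m i), ∑ k' : Fin (m p.1),
          (Module.finrank ℂ (Hπ p.1) : ℂ)⁻¹ * ⟪f j p.1 k', f j p.1 p.2⟫
            * ⟪g p.1 p.2, g p.1 k'⟫ := by
        refine Finset.sum_congr rfl (fun p _ => ?_)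
        rw [← Finset.univ_sigma_univ, Finset.sum_sigma]
        rw [Fintype.sum_eq_single p.1 (fun i' hne' => ?_)]
        · exact Finset.sum_congr rfl (fun k' _ =>
            orth_same (π p.1) (hirr p.1) (g p.1 p.2) (f j p.1 p.2) (g p.1 k') (f j p.1 k'))
        · refine Finset.sum_eq_zero (fun k' _ => ?_)
          exact orth_diff (π i') (π p.1) (hirr i') (hirr p.1)
            (hineq i' p.1 hne') (g p.1 p.2) (f j p.1 p.2) (g i' k') (f j i' k')
    _ = ∑ i, (Module.finrank ℂ (Hπ i) : ℂ)⁻¹ *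
          ∑ k, ∑ k', ⟪f j i k', f j i k⟫ * ⟪g i k, g i k'⟫ := by
        rw [← Finset.univ_sigma_univ, Finset.sum_sigma]
        refine Finset.sum_congr rfl (fun i _ => ?_)
        rw [Finset.mul_sum]
        refine Finset.sum_congr rfl (fun k _ => ?_)
        rw [Finset.mul_sum]
        exact Finset.sum_congr rfl (fun k' _ => by ring)

end Main
end GFDAux

open GFDAux in
/-- Duality for group frames with multiple generators (finite group case): the orbit of
the family `{f_j}` under `ρ = ⊕_π π^{⊕ m_π}` is a frame for `H = ⊕_π H_π^{⊕ m_π}` with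
(continuous) bounds `A, B` iff for every `π` the rows of the coefficient array form a
Riesz sequence with bounds `d_π A, d_π B`. -/
theorem group_frame_duality
    {K : Type*} [Group K] [Fintype K]
    {ι : Type*} [Fintype ι]
    (Hπ : ι → Type*) [∀ i, NormedAddCommGroup (Hπ i)] [∀ i, InnerProductSpace ℂ (Hπ i)]
    [∀ i, FiniteDimensional ℂ (Hπ i)]
    (π : ∀ i, K →* (Hπ i ≃ₗᵢ[ℂ] Hπ i))
    (hirr : ∀ i, ∀ W : Submodule ℂ (Hπ i), (∀ ξ : K, ∀ v ∈ W, π i ξ v ∈ W) → W = ⊥ ∨ W = ⊤)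
    (hineq : ∀ i j, i ≠ j →
      ¬ ∃ T : Hπ i ≃ₗ[ℂ] Hπ j, ∀ (ξ : K) (v : Hπ i), T (π i ξ v) = π j ξ (T v))
    (m : ι → ℕ)
    {I : Type*} [Fintype I]
    (f : I → ∀ i, Fin (m i) → Hπ i)
    (A B : ℝ) (hA : 0 < A) (hAB : A ≤ B) :
    (∀ g : ∀ i, Fin (m i) → Hπ i,
        A * (∑ i, ∑ k, ‖g i k‖ ^ 2)
          ≤ (Fintype.card K : ℝ)⁻¹ * ∑ j : I, ∑ ξ : K,
              ‖∑ i, ∑ k, (inner ℂ (g i k) (π i ξ (f j i k)) : ℂ)‖ ^ 2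
        ∧ (Fintype.card K : ℝ)⁻¹ * ∑ j : I, ∑ ξ : K,
              ‖∑ i, ∑ k, (inner ℂ (g i k) (π i ξ (f j i k)) : ℂ)‖ ^ 2
          ≤ B * (∑ i, ∑ k, ‖g i k‖ ^ 2))
      ↔ (∀ i, ∀ c : Fin (m i) → ℂ,
          (Module.finrank ℂ (Hπ i) : ℝ) * A * ∑ k, ‖c k‖ ^ 2
            ≤ ∑ j : I, ‖∑ k, c k • f j i k‖ ^ 2
          ∧ ∑ j : I, ‖∑ k, c k • f j i k‖ ^ 2
            ≤ (Module.finrank ℂ (Hπ i) : ℝ) * B * ∑ k, ‖c k‖ ^ 2) := by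
  classical
  -- the key identity
  have keyR : ∀ g : (∀ i, Fin (m i) → Hπ i),
      (Fintype.card K : ℝ)⁻¹ * ∑ j : I, ∑ ξ : K,
          ‖∑ i, ∑ k, (inner ℂ (g i k) (π i ξ (f j i k)) : ℂ)‖ ^ 2
        = ∑ i, ((Module.finrank ℂ (Hπ i) : ℝ)⁻¹ *
            ∑ t, ∑ j : I, ‖∑ k, (⟪g i k, stdOrthonormalBasis ℂ (Hπ i) t⟫ : ℂ) • f j i k‖ ^ 2) := by
    intro g
    calc (Fintype.card K : ℝ)⁻¹ * ∑ j : I, ∑ ξ : K,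
          ‖∑ i, ∑ k, (inner ℂ (g i k) (π i ξ (f j i k)) : ℂ)‖ ^ 2
        = ∑ j : I, ((Fintype.card K : ℂ)⁻¹ * ∑ ξ : K,
            ((∑ i, ∑ k, (⟪g i k, π i ξ (f j i k)⟫ : ℂ)) *
              (starRingEnd ℂ) (∑ i, ∑ k, (⟪g i k, π i ξ (f j i k)⟫ : ℂ)))).re := by
          rw [Finset.mul_sum]
          refine Finset.sum_congr rfl fun j _ => ?_
          rw [show ((Fintype.card K : ℂ))⁻¹ = (((Fintype.card K : ℝ)⁻¹ : ℝ) : ℂ) by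
            push_cast; ring]
          rw [Complex.re_ofReal_mul, Complex.re_sum]
          congr 1
          exact Finset.sum_congr rfl fun ξ _ => norm_sq_complex _
      _ = ∑ j : I, (∑ i, (Module.finrank ℂ (Hπ i) : ℂ)⁻¹ *
            ∑ k, ∑ k', (⟪f j i k', f j i k⟫ : ℂ) * ⟪g i k, g i k'⟫).re := by
          exact Finset.sum_congr rfl fun j _ => congrArg Complex.re
            (keyC Hπ π hirr hineq m f j g)
      _ = ∑ i, ∑ j : I, ((Module.finrank ℂ (Hπ i) : ℂ)⁻¹ *
            ∑ k, ∑ k', (⟪f j i k', f j i k⟫ : ℂ) * ⟪g i k, g i k'⟫).re := by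
          simp only [Complex.re_sum]
          exact Finset.sum_comm
      _ = ∑ i, ((Module.finrank ℂ (Hπ i) : ℝ)⁻¹ *
            ∑ t, ∑ j : I, ‖∑ k, (⟪g i k, stdOrthonormalBasis ℂ (Hπ i) t⟫ : ℂ) • f j i k‖ ^ 2) := by
          refine Finset.sum_congr rfl fun i _ => ?_
          rw [Finset.sum_comm, Finset.mul_sum]
          refine Finset.sum_congr rfl fun j _ => ?_
          rw [basis_sum_eq (fun k => g i k) (fun k => f j i k)]
          rw [show ((Module.finrank ℂ (Hπ i) : ℂ))⁻¹
              = (((Module.finrank ℂ (Hπ i) : ℝ)⁻¹ : ℝ) : ℂ) by push_cast; ring]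
          rw [Complex.re_ofReal_mul]
    done
  constructor
  · -- frame ⇒ Riesz
    intro h i₀ c
    by_cases hd : Module.finrank ℂ (Hπ i₀) = 0
    · have hsub : Subsingleton (Hπ i₀) := Module.finrank_zero_iff.mp hd
      have hzero : ∀ j : I, (∑ k, c k • f j i₀ k) = 0 := fun j => Subsingleton.elim _ _
      simp only [hd, hzero, norm_zero, Nat.cast_zero, zero_mul, Finset.sum_const,
        Finset.card_univ, smul_zero, ne_eq]
      norm_num
    · have hdpos : (0:ℝ) < (Module.finrank ℂ (Hπ i₀) : ℝ) := by
        exact_mod_cast Nat.pos_of_ne_zero hd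
      set e := stdOrthonormalBasis ℂ (Hπ i₀) with he
      set t₀ : Fin (Module.finrank ℂ (Hπ i₀)) := ⟨0, Nat.pos_of_ne_zero hd⟩ with ht₀
      set u : Hπ i₀ := e t₀ with hu
      set g : ∀ i, Fin (m i) → Hπ i :=
        Function.update (fun i => (0 : Fin (m i) → Hπ i)) i₀
          (fun k => (starRingEnd ℂ) (c k) • u) with hg
      have hg₀ : g i₀ = fun k => (starRingEnd ℂ) (c k) • u := Function.update_self _ _ _
      have hgne : ∀ i, i ≠ i₀ → g i = 0 := fun i hi => Function.update_of_ne hi _ _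
      obtain ⟨h1, h2⟩ := h g
      rw [keyR g] at h1 h2
      -- compute the right-hand side sum
      have hsum : (∑ i, ((Module.finrank ℂ (Hπ i) : ℝ)⁻¹ *
            ∑ t, ∑ j : I, ‖∑ k, (⟪g i k, stdOrthonormalBasis ℂ (Hπ i) t⟫ : ℂ) • f j i k‖ ^ 2))
          = (Module.finrank ℂ (Hπ i₀) : ℝ)⁻¹ * ∑ j : I, ‖∑ k, c k • f j i₀ k‖ ^ 2 := by
        rw [Fintype.sum_eq_single i₀ (fun i hi => ?_)]
        · congr 1
          rw [Fintype.sum_eq_single t₀ (fun t ht => ?_)]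
          · refine Finset.sum_congr rfl fun j _ => ?_
            congr 2
            refine Finset.sum_congr rfl fun k _ => ?_
            rw [hg₀]
            rw [inner_smul_left, RingHomCompTriple.comp_apply, RingHom.id_apply]
            rw [show (⟪u, e t₀⟫ : ℂ) = 1 by
              rw [hu, @inner_self_eq_norm_sq_to_K ℂ, e.orthonormal.1 t₀]; norm_num]
            rw [mul_one]
          · have hkz : ∀ k : Fin (m i₀), (⟪g i₀ k, e t⟫ : ℂ) = 0 := by
              intro k
              rw [hg₀, inner_smul_left, hu, e.orthonormal.2 (fun hc => ht hc.symm), mul_zero]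
            simp [← he, hkz]
        · have : g i = 0 := hgne i hi
          simp [this]
      rw [hsum] at h1 h2
      have hnorm : (∑ i, ∑ k, ‖g i k‖ ^ 2) = ∑ k, ‖c k‖ ^ 2 := by
        rw [Fintype.sum_eq_single i₀ (fun i hi => by simp [hgne i hi])]
        refine Finset.sum_congr rfl fun k _ => ?_
        rw [hg₀]
        simp only [norm_smul, RCLike.norm_conj]
        rw [show ‖u‖ = 1 from e.orthonormal.1 t₀, mul_one]
      rw [hnorm] at h1 h2
      rw [inv_mul_eq_div, le_div_iff₀ hdpos] at h1
      rw [inv_mul_eq_div, div_le_iff₀ hdpos] at h2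
      constructor
      · calc (Module.finrank ℂ (Hπ i₀) : ℝ) * A * ∑ k, ‖c k‖ ^ 2
            = A * (∑ k, ‖c k‖ ^ 2) * (Module.finrank ℂ (Hπ i₀) : ℝ) := by ring
          _ ≤ _ := h1
      · calc ∑ j : I, ‖∑ k, c k • f j i₀ k‖ ^ 2
            ≤ B * (∑ k, ‖c k‖ ^ 2) * (Module.finrank ℂ (Hπ i₀) : ℝ) := h2
          _ = (Module.finrank ℂ (Hπ i₀) : ℝ) * B * ∑ k, ‖c k‖ ^ 2 := by ring
  · -- Riesz ⇒ frame
    intro h g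
    rw [keyR g]
    have hbound : ∀ i,
        A * ∑ k, ‖g i k‖ ^ 2
          ≤ (Module.finrank ℂ (Hπ i) : ℝ)⁻¹ *
              ∑ t, ∑ j : I, ‖∑ k, (⟪g i k, stdOrthonormalBasis ℂ (Hπ i) t⟫ : ℂ) • f j i k‖ ^ 2
        ∧ (Module.finrank ℂ (Hπ i) : ℝ)⁻¹ *
              ∑ t, ∑ j : I, ‖∑ k, (⟪g i k, stdOrthonormalBasis ℂ (Hπ i) t⟫ : ℂ) • f j i k‖ ^ 2
          ≤ B * ∑ k, ‖g i k‖ ^ 2 := by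
      intro i
      by_cases hd : Module.finrank ℂ (Hπ i) = 0
      · have hsub : Subsingleton (Hπ i) := Module.finrank_zero_iff.mp hd
        have hgz : ∀ k : Fin (m i), g i k = 0 := fun k => Subsingleton.elim _ _
        simp [hgz, hd]
      · have hdpos : (0:ℝ) < (Module.finrank ℂ (Hπ i) : ℝ) := by
          exact_mod_cast Nat.pos_of_ne_zero hd
        have hpar : ∑ t, ∑ k, ‖(⟪g i k, stdOrthonormalBasis ℂ (Hπ i) t⟫ : ℂ)‖ ^ 2
            = ∑ k, ‖g i k‖ ^ 2 := by
          rw [Finset.sum_comm]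
          exact Finset.sum_congr rfl fun k _ => parseval (g i k)
        have hlow : (Module.finrank ℂ (Hπ i) : ℝ) * A * ∑ k, ‖g i k‖ ^ 2
            ≤ ∑ t, ∑ j : I, ‖∑ k, (⟪g i k, stdOrthonormalBasis ℂ (Hπ i) t⟫ : ℂ) • f j i k‖ ^ 2 := by
          calc (Module.finrank ℂ (Hπ i) : ℝ) * A * ∑ k, ‖g i k‖ ^ 2
              = ∑ t, (Module.finrank ℂ (Hπ i) : ℝ) * A *
                  ∑ k, ‖(⟪g i k, stdOrthonormalBasis ℂ (Hπ i) t⟫ : ℂ)‖ ^ 2 := by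
                rw [← Finset.mul_sum, hpar]
            _ ≤ _ := Finset.sum_le_sum fun t _ =>
                (h i (fun k => ⟪g i k, stdOrthonormalBasis ℂ (Hπ i) t⟫)).1
        have hhigh : ∑ t, ∑ j : I, ‖∑ k, (⟪g i k, stdOrthonormalBasis ℂ (Hπ i) t⟫ : ℂ) • f j i k‖ ^ 2
            ≤ (Module.finrank ℂ (Hπ i) : ℝ) * B * ∑ k, ‖g i k‖ ^ 2 := by
          calc ∑ t, ∑ j : I, ‖∑ k, (⟪g i k, stdOrthonormalBasis ℂ (Hπ i) t⟫ : ℂ) • f j i k‖ ^ 2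
              ≤ ∑ t, (Module.finrank ℂ (Hπ i) : ℝ) * B *
                  ∑ k, ‖(⟪g i k, stdOrthonormalBasis ℂ (Hπ i) t⟫ : ℂ)‖ ^ 2 :=
                Finset.sum_le_sum fun t _ =>
                  (h i (fun k => ⟪g i k, stdOrthonormalBasis ℂ (Hπ i) t⟫)).2
            _ = (Module.finrank ℂ (Hπ i) : ℝ) * B * ∑ k, ‖g i k‖ ^ 2 := by
                rw [← Finset.mul_sum, hpar]
        constructor
        · rw [inv_mul_eq_div, le_div_iff₀ hdpos]
          calc A * (∑ k, ‖g i k‖ ^ 2) * (Module.finrank ℂ (Hπ i) : ℝ)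
              = (Module.finrank ℂ (Hπ i) : ℝ) * A * ∑ k, ‖g i k‖ ^ 2 := by ring
            _ ≤ _ := hlow
        · rw [inv_mul_eq_div, div_le_iff₀ hdpos]
          calc ∑ t, ∑ j : I, ‖∑ k, (⟪g i k, stdOrthonormalBasis ℂ (Hπ i) t⟫ : ℂ) • f j i k‖ ^ 2
              ≤ (Module.finrank ℂ (Hπ i) : ℝ) * B * ∑ k, ‖g i k‖ ^ 2 := hhigh
            _ = B * (∑ k, ‖g i k‖ ^ 2) * (Module.finrank ℂ (Hπ i) : ℝ) := by ring
    constructor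
    · rw [Finset.mul_sum]
      exact Finset.sum_le_sum fun i _ => (hbound i).1
    · rw [Finset.mul_sum]
      exact Finset.sum_le_sum fun i _ => (hbound i).2
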